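/- Suppose Φ(z) = Σ_{u=0}^∞ Φ_u z^u with Φ_u bounded operators on 𝒞 and the series converging in operator norm for |z| ≤ r₀, and set Φ♯(z) = Σ_{u=0}^∞ Φ_u* z^u. Let w ∈ ℂ with |w| < r and ξ ∈ 𝒞. Then the function h(z) = −(r²/z) · (Φ♯(r²/z) + Φ(conj(w))) · (1 − (r²/z)·conj(w))^{-1} ξ, defined for |z| > r, belongs to H⁻_{2,r}(𝒞): it has an expansion h(z) = Σ_{m=1}^∞ h_m z^{-m} with Σ_{m=1}^∞ R^{2m} ‖h_m‖² < ∞. -/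

import Mathlib

open ComplexConjugate

set_option maxHeartbeats 1000000 in
/-- with `Φ(z) = Σ Φ_u z^u` (operator-norm convergent for `|z| ≤ r₀`) and
`Φ♯(z) = Σ Φ_u* z^u`, for `|w| < r` and `ξ ∈ 𝒞` the function
`h(z) = -(r²/z)(Φ♯(r²/z) + Φ(conj w))(1-(r²/z)·conj w)⁻¹ ξ` (for `|z| > r`) belongs to
`H⁻_{2,r}(𝒞)`: it has an expansion `h(z) = Σ_{m≥1} h_m z^{-m}` with `Σ R^{2m}‖h_m‖² < ∞`. -/
theorem statement15 {C : Type*} [NormedAddCommGroup C] [InnerProductSpace ℂ C] [CompleteSpace C]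
    (r r₀ R : ℝ) (hr0 : 0 < r) (hrr0 : r < r₀) (hr01 : r₀ < 1) (hR : R = 1 / r)
    (Φ : ℂ → C →L[ℂ] C) (Φc : ℕ → C →L[ℂ] C)
    (hΦ : ∀ z : ℂ, ‖z‖ ≤ r₀ → HasSum (fun u : ℕ => z ^ u • Φc u) (Φ z))
    (w : ℂ) (hw : ‖w‖ < r) (ξ : C) :
    ∃ h : ℕ → C,
      (Summable fun m : ℕ => R ^ (2 * (m + 1)) * ‖h m‖ ^ 2) ∧
      ∀ z : ℂ, r < ‖z‖ →
        (-(r : ℂ) ^ 2 / z) • ((1 - ((r : ℂ) ^ 2 / z) * conj w)⁻¹ •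
            (((∑' u : ℕ, ((r : ℂ) ^ 2 / z) ^ u • ContinuousLinearMap.adjoint (Φc u))
                + Φ (conj w)) ξ))
          = ∑' m : ℕ, (z ^ (m + 1))⁻¹ • h m := by
  have hr₀0 : 0 < r₀ := hr0.trans hrr0
  have hr1 : r < 1 := hrr0.trans hr01
  -- bound on coefficients
  obtain ⟨M, hM⟩ : ∃ M : ℝ, ∀ u : ℕ, r₀ ^ u * ‖Φc u‖ ≤ M := by
    have hs : Summable (fun u : ℕ => (r₀ : ℂ) ^ u • Φc u) :=
      (hΦ (r₀ : ℂ) (by simp [abs_of_pos hr₀0])).summable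
    have ht : Filter.Tendsto (fun u : ℕ => ‖(r₀ : ℂ) ^ u • Φc u‖) Filter.atTop (nhds 0) := by
      simpa using hs.tendsto_atTop_zero.norm
    obtain ⟨M, hM⟩ := ht.bddAbove_range
    refine ⟨M, fun u => ?_⟩
    have := hM ⟨u, rfl⟩
    simpa [norm_smul, abs_of_pos hr₀0] using this
  have hM0 : (0:ℝ) ≤ M := le_trans (by simpa using norm_nonneg (Φc 0)) (hM 0)
  have hΦcb : ∀ u : ℕ, ‖Φc u‖ ≤ M * (1 / r₀) ^ u := by
    intro u
    have h1 : (0:ℝ) < r₀ ^ u := pow_pos hr₀0 u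
    rw [div_pow, one_pow, mul_one_div, le_div_iff₀ h1, mul_comm]
    exact hM u
  have hAn : ∀ u : ℕ, ‖ContinuousLinearMap.adjoint (Φc u)‖ = ‖Φc u‖ := fun u =>
    ContinuousLinearMap.adjoint.norm_map (Φc u)
  have hw' : ‖conj w‖ < r := by simpa using hw
  have hw'0 : (0:ℝ) ≤ ‖conj w‖ := norm_nonneg _
  have hrr₀1 : r * r₀ < 1 := by nlinarith
  -- coefficients
  set c : ℕ → C := fun m =>
    (∑ k ∈ Finset.range (m + 1), (conj w) ^ k • (ContinuousLinearMap.adjoint (Φc (m - k)) ξ))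
      + (conj w) ^ m • (Φ (conj w) ξ) with hc_def
  set K : ℝ := M * ‖ξ‖ * (1 - r * r₀)⁻¹ + ‖Φ (conj w) ξ‖ with hK_def
  have h1r : (0:ℝ) < 1 - r * r₀ := by nlinarith
  have hK0 : 0 ≤ K :=
    add_nonneg (mul_nonneg (mul_nonneg hM0 (norm_nonneg _)) (inv_nonneg.mpr h1r.le))
      (norm_nonneg _)
  have hcb : ∀ m : ℕ, ‖c m‖ ≤ K * (1 / r₀) ^ m := by
    intro m
    have h1 : ‖∑ k ∈ Finset.range (m + 1),
        (conj w) ^ k • (ContinuousLinearMap.adjoint (Φc (m - k)) ξ)‖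
        ≤ M * ‖ξ‖ * (1 - r * r₀)⁻¹ * (1 / r₀) ^ m := by
      calc ‖∑ k ∈ Finset.range (m + 1),
          (conj w) ^ k • (ContinuousLinearMap.adjoint (Φc (m - k)) ξ)‖
          ≤ ∑ k ∈ Finset.range (m + 1), (M * ‖ξ‖ * (1 / r₀) ^ m) * (r * r₀) ^ k := by
            refine norm_sum_le_of_le _ fun k hk => ?_
            have hk' : k ≤ m := Nat.lt_succ_iff.mp (Finset.mem_range.mp hk)
            have h2 : ‖(conj w) ^ k • (ContinuousLinearMap.adjoint (Φc (m - k)) ξ)‖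
                ≤ ‖conj w‖ ^ k * (M * (1 / r₀) ^ (m - k) * ‖ξ‖) := by
              rw [norm_smul, norm_pow]
              refine mul_le_mul_of_nonneg_left ?_ (by positivity)
              calc ‖ContinuousLinearMap.adjoint (Φc (m - k)) ξ‖
                  ≤ ‖ContinuousLinearMap.adjoint (Φc (m - k))‖ * ‖ξ‖ :=
                    ContinuousLinearMap.le_opNorm _ _
                _ ≤ M * (1 / r₀) ^ (m - k) * ‖ξ‖ := by
                    refine mul_le_mul_of_nonneg_right ?_ (norm_nonneg ξ)
                    rw [hAn]; exact hΦcb (m - k)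
            refine h2.trans ?_
            have hkey : ‖conj w‖ ^ k * (M * (1 / r₀) ^ (m - k) * ‖ξ‖)
                ≤ r ^ k * (M * (1 / r₀) ^ (m - k) * ‖ξ‖) := by
              exact mul_le_mul_of_nonneg_right (pow_le_pow_left₀ hw'0 hw'.le k)
                (mul_nonneg (mul_nonneg hM0 (by positivity)) (norm_nonneg _))
            refine hkey.trans (le_of_eq ?_)
            have : r ^ k * (1 / r₀) ^ (m - k) = (1 / r₀) ^ m * (r * r₀) ^ k := by
              have hsplit : (1 / r₀ : ℝ) ^ m = (1 / r₀) ^ (m - k) * (1 / r₀) ^ k := by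
                rw [← pow_add, Nat.sub_add_cancel hk']
              rw [hsplit, mul_pow]
              have h0 : (1 / r₀) ^ k * r₀ ^ k = 1 := by
                rw [← mul_pow, one_div, inv_mul_cancel₀ hr₀0.ne', one_pow]
              linear_combination (-(r ^ k * (1 / r₀) ^ (m - k))) * h0
            calc r ^ k * (M * (1 / r₀) ^ (m - k) * ‖ξ‖)
                = (M * ‖ξ‖) * (r ^ k * (1 / r₀) ^ (m - k)) := by ring
              _ = (M * ‖ξ‖) * ((1 / r₀) ^ m * (r * r₀) ^ k) := by rw [this]
              _ = M * ‖ξ‖ * (1 / r₀) ^ m * (r * r₀) ^ k := by ring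
        _ = (M * ‖ξ‖ * (1 / r₀) ^ m) * ∑ k ∈ Finset.range (m + 1), (r * r₀) ^ k := by
            rw [Finset.mul_sum]
        _ ≤ (M * ‖ξ‖ * (1 / r₀) ^ m) * (1 - r * r₀)⁻¹ := by
            refine mul_le_mul_of_nonneg_left ?_
              (mul_nonneg (mul_nonneg hM0 (norm_nonneg _)) (by positivity))
            have hgs := Summable.sum_le_tsum (Finset.range (m + 1))
              (fun i _ => pow_nonneg (by positivity) i)
              (summable_geometric_of_lt_one (by positivity) hrr₀1)
            simpa [tsum_geometric_of_lt_one (by positivity : (0:ℝ) ≤ r * r₀) hrr₀1] using hgs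
        _ = M * ‖ξ‖ * (1 - r * r₀)⁻¹ * (1 / r₀) ^ m := by ring
    have h2 : ‖(conj w) ^ m • (Φ (conj w) ξ)‖ ≤ ‖Φ (conj w) ξ‖ * (1 / r₀) ^ m := by
      rw [norm_smul, norm_pow, mul_comm]
      refine mul_le_mul_of_nonneg_left ?_ (norm_nonneg _)
      refine (pow_le_pow_left₀ hw'0 (hw'.le.trans hr1.le) m).trans ?_
      refine pow_le_pow_left₀ zero_le_one ?_ m
      rw [le_div_iff₀ hr₀0, one_mul]; exact hr01.le
    calc ‖c m‖ ≤ _ + _ := norm_add_le _ _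
      _ ≤ M * ‖ξ‖ * (1 - r * r₀)⁻¹ * (1 / r₀) ^ m + ‖Φ (conj w) ξ‖ * (1 / r₀) ^ m :=
          add_le_add h1 h2
      _ = K * (1 / r₀) ^ m := by rw [hK_def]; ring
  refine ⟨fun m => (-(r : ℂ) ^ (2 * (m + 1))) • c m, ?_, ?_⟩
  · -- summability of the coefficients
    have hr₀ne : r₀ ≠ 0 := hr₀0.ne'
    have hrne : r ≠ 0 := hr0.ne'
    have hR0 : 0 ≤ R := by rw [hR]; positivity
    have hcomp : Summable (fun m : ℕ => (r ^ 2 * K ^ 2) * ((r / r₀) ^ 2) ^ m) := by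
      refine Summable.mul_left _ (summable_geometric_of_lt_one (by positivity) ?_)
      have hlt : r / r₀ < 1 := (div_lt_one hr₀0).mpr hrr0
      exact pow_lt_one₀ (by positivity) hlt (by norm_num)
    refine Summable.of_nonneg_of_le (fun m => ?_) (fun m => ?_) hcomp
    · exact mul_nonneg (pow_nonneg hR0 _) (sq_nonneg _)
    · have hterm : R ^ (2 * (m + 1)) * ‖(-(r : ℂ) ^ (2 * (m + 1))) • c m‖ ^ 2
          = r ^ (2 * (m + 1)) * ‖c m‖ ^ 2 := by
        have hnr : ‖(-(r : ℂ) ^ (2 * (m + 1)))‖ = r ^ (2 * (m + 1)) := by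
          simp [abs_of_pos hr0]
        rw [norm_smul, hnr, hR, mul_pow]
        have h0 : (1 / r) ^ (2 * (m + 1)) * r ^ (2 * (m + 1)) = 1 := by
          rw [← mul_pow, one_div, inv_mul_cancel₀ hrne, one_pow]
        linear_combination (r ^ (2 * (m + 1)) * ‖c m‖ ^ 2) * h0
      rw [hterm]
      calc r ^ (2 * (m + 1)) * ‖c m‖ ^ 2
          ≤ r ^ (2 * (m + 1)) * (K * (1 / r₀) ^ m) ^ 2 := by
            exact mul_le_mul_of_nonneg_left
              (pow_le_pow_left₀ (norm_nonneg _) (hcb m) 2) (by positivity)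
        _ = (r ^ 2 * K ^ 2) * ((r / r₀) ^ 2) ^ m := by
            field_simp
            ring
  · -- the expansion identity
    intro z hz
    have hz0 : z ≠ 0 := by
      intro hzz
      rw [hzz] at hz
      simp at hz
      linarith
    set q : ℂ := (r : ℂ) ^ 2 / z with hq
    have hzpos : (0:ℝ) < ‖z‖ := hr0.trans hz
    have hqn : ‖q‖ < r := by
      rw [hq, norm_div]
      rw [div_lt_iff₀ hzpos]
      have hnr2 : ‖(r : ℂ) ^ 2‖ = r ^ 2 := by simp [abs_of_pos hr0]
      rw [hnr2]
      nlinarith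
    have hq1 : ‖q * conj w‖ < 1 := by
      rw [norm_mul]
      nlinarith [norm_nonneg q, hw'0]
    have hr₀ne : r₀ ≠ 0 := hr₀0.ne'
    -- summability of the two operator series
    have hgn : Summable (fun j : ℕ => ‖q ^ j • ContinuousLinearMap.adjoint (Φc j)‖) := by
      refine Summable.of_nonneg_of_le (fun j => norm_nonneg _) (fun j => ?_)
        ((summable_geometric_of_lt_one (div_nonneg (norm_nonneg q) hr₀0.le)
          (by rw [div_lt_one hr₀0]; exact hqn.trans hrr0)).mul_left M)
      rw [norm_smul, norm_pow, hAn]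
      calc ‖q‖ ^ j * ‖Φc j‖ ≤ ‖q‖ ^ j * (M * (1 / r₀) ^ j) :=
            mul_le_mul_of_nonneg_left (hΦcb j) (by positivity)
        _ = M * (‖q‖ / r₀) ^ j := by
            field_simp
            ring
    have hfn : Summable (fun k : ℕ => ‖(q * conj w) ^ k • (1 : C →L[ℂ] C)‖) := by
      refine Summable.of_nonneg_of_le (fun k => norm_nonneg _) (fun k => ?_)
        (summable_geometric_of_lt_one (norm_nonneg _) hq1)
      rw [norm_smul, norm_pow]
      calc ‖q * conj w‖ ^ k * ‖(1 : C →L[ℂ] C)‖ ≤ ‖q * conj w‖ ^ k * 1 :=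
            mul_le_mul_of_nonneg_left ContinuousLinearMap.norm_id_le (by positivity)
        _ = ‖q * conj w‖ ^ k := mul_one _
    -- Cauchy product at the operator level
    have hCau := hasSum_sum_range_mul_of_summable_norm hfn hgn
    have htf : (∑' k : ℕ, (q * conj w) ^ k • (1 : C →L[ℂ] C)) = (1 - q * conj w)⁻¹ • 1 := by
      rw [(summable_geometric_of_norm_lt_one hq1).tsum_smul_const,
        tsum_geometric_of_norm_lt_one hq1]
    rw [htf, smul_mul_assoc, one_mul] at hCau
    have heval := (ContinuousLinearMap.apply ℂ C ξ).hasSum hCau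
    have hGeo : HasSum (fun n : ℕ => (q * conj w) ^ n • (Φ (conj w) ξ))
        ((1 - q * conj w)⁻¹ • (Φ (conj w) ξ)) :=
      (hasSum_geometric_of_norm_lt_one hq1).smul_const _
    have hadd := heval.add hGeo
    have hfun : (fun n : ℕ => (ContinuousLinearMap.apply ℂ C ξ)
          (∑ k ∈ Finset.range (n + 1), ((q * conj w) ^ k • (1 : C →L[ℂ] C)) *
            (q ^ (n - k) • ContinuousLinearMap.adjoint (Φc (n - k))))
          + (q * conj w) ^ n • (Φ (conj w) ξ)) = fun n => q ^ n • c n := by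
      funext n
      rw [hc_def]
      simp only [ContinuousLinearMap.apply_apply, ContinuousLinearMap.sum_apply, smul_add,
        Finset.smul_sum]
      congr 1
      · refine Finset.sum_congr rfl fun k hk => ?_
        have hk' : k ≤ n := Nat.lt_succ_iff.mp (Finset.mem_range.mp hk)
        rw [smul_mul_assoc, one_mul]
        simp only [ContinuousLinearMap.smul_apply]
        rw [smul_smul, smul_smul]
        congr 1
        rw [mul_pow, mul_right_comm, ← pow_add, Nat.add_sub_cancel' hk']
      · rw [mul_pow, mul_smul]
    rw [hfun] at hadd
    have hfin : HasSum (fun m : ℕ => (z ^ (m + 1))⁻¹ • ((-(r : ℂ) ^ (2 * (m + 1))) • c m))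
        ((-q) • (((1 - q * conj w)⁻¹ • (∑' j : ℕ, q ^ j • ContinuousLinearMap.adjoint (Φc j))) ξ
          + (1 - q * conj w)⁻¹ • (Φ (conj w) ξ))) := by
      have h2 := hadd.const_smul (-q)
      have hfe : (fun n : ℕ => (-q) • (q ^ n • c n))
          = fun m : ℕ => (z ^ (m + 1))⁻¹ • ((-(r : ℂ) ^ (2 * (m + 1))) • c m) := by
        funext m
        rw [smul_smul, smul_smul]
        congr 1
        rw [hq]
        ring
      rwa [hfe] at h2
    simp only [ContinuousLinearMap.smul_apply] at hfin
    rw [neg_div, ← hq, ContinuousLinearMap.add_apply, smul_add]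
    exact hfin.tsum_eq.symm
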